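/- Redundant built-in constraints can be removed while preserving computations: if CT ⊨ ∀(D → C) and (H ∧ C ∧ D ∧ G) ↦* S, then (H ∧ D ∧ G) ↦* S, where H, G are goals, C, D are built-in constraints, and ↦* is the reflexive-transitive closure of the CHR transition relation. -/
import Mathlib


/-- Built-in constraints are modelled semantically as predicates on valuations `V`
(models of the constraint theory CT); a built-in store is a set of such constraints, with
conjunctive meaning. -/
def Meaning {V : Type*} (S : Set (V → Prop)) : V → Prop := fun v => ∀ c ∈ S, c v

/-- A CHR rule: its applicability condition depends on the built-in store only through its
CT-meaning (so CT-equivalent stores enable the same rule applications); applying the rule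
replaces the matched user constraints by the body user constraints and adds the body
built-ins. -/
structure CHRRule (U V : Type*) where
  appl : (V → Prop) → Multiset U → Prop
  appl_congr : ∀ ⦃b b' : V → Prop⦄ ⦃h : Multiset U⦄,
    (∀ v, b v ↔ b' v) → appl b h → appl b' h
  bodyUd : Multiset U → Multiset U
  bodyBi : Multiset U → Set (V → Prop)

/-- One CHR transition step of program `P` on states (user multiset, built-in store). -/
def CHRStep {U V : Type*} [DecidableEq U] (P : Set (CHRRule U V))
    (s t : Multiset U × Set (V → Prop)) : Prop :=
  ∃ r ∈ P, ∃ h : Multiset U, h ≤ s.1 ∧ r.appl (Meaning s.2) h ∧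
    t = (s.1 - h + r.bodyUd h, s.2 ∪ r.bodyBi h)

/-- Redundant built-in constraints can be removed while preserving
computations: if CT ⊨ ∀(D → C) and (H ∧ C ∧ D ∧ G) ↦* S, then (H ∧ D ∧ G) ↦* S
(resulting states compared up to CT-equivalence of their built-in constraints). -/
theorem remove_redundant_builtins {U V : Type*} [DecidableEq U]
    (P : Set (CHRRule U V))
    (Hud Gud : Multiset U) (C D : V → Prop) (Gbi : Set (V → Prop))
    (hDC : ∀ v, D v → C v)
    (S : Multiset U × Set (V → Prop))
    (hcomp : Relation.ReflTransGen (CHRStep P)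
      (Hud + Gud, insert C (insert D Gbi)) S) :
    ∃ Sbi' : Set (V → Prop),
      Relation.ReflTransGen (CHRStep P) (Hud + Gud, insert D Gbi) (S.1, Sbi') ∧
      ∀ v, Meaning Sbi' v ↔ Meaning S.2 v := by
  induction hcomp with
  | refl =>
    refine ⟨insert D Gbi, Relation.ReflTransGen.refl, fun v => ?_⟩
    constructor
    · intro hm c hc
      rcases hc with rfl | hc
      · exact hDC v (hm D (Or.inl rfl))
      · exact hm c hc
    · intro hm c hc
      exact hm c (Or.inr hc)
  | tail hst hstep ih =>
    obtain ⟨Sbi', hreach, hequiv⟩ := ih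
    obtain ⟨r, hrP, h, hle, happl, rfl⟩ := hstep
    refine ⟨Sbi' ∪ r.bodyBi h, hreach.tail ?_, fun v => ?_⟩
    · exact ⟨r, hrP, h, hle, r.appl_congr (fun v => (hequiv v).symm) happl, rfl⟩
    · constructor
      · intro hm c hc
        rcases hc with hc | hc
        · exact (hequiv v).mp (fun c' hc' => hm c' (Or.inl hc')) c hc
        · exact hm c (Or.inr hc)
      · intro hm c hc
        rcases hc with hc | hc
        · exact (hequiv v).mpr (fun c' hc' => hm c' (Or.inl hc')) c hc
        · exact hm c (Or.inr hc)
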